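/- Let R be an almost Dedekind domain, ℓ a singular length function on R with associated ideal colength τ (τ(I) := ℓ(R/I) ∈ {0, ∞}). Then for all ideals I, J of R: τ(IJ) = τ(I) + τ(J); and if Iⁿ ⊆ J ⊆ I for some n ≥ 1, then τ(I) = τ(J). -/

import Mathlib

open scoped ENNReal

universe u

def AlmostDedekind (R : Type*) [CommRing R] [IsDomain R] : Prop :=
  ∀ M : MaximalSpectrum R, IsDiscreteValuationRing (Localization.AtPrime M.asIdeal)

section Aux

variable {R : Type u} [CommRing R]
  (ℓ : ∀ (M : Type u) [AddCommGroup M] [Module R M], ℝ≥0∞)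
  (hzero : ∀ (M : Type u) [AddCommGroup M] [Module R M], Subsingleton M → ℓ M = 0)
  (hadd : ∀ (A B C : Type u) [AddCommGroup A] [Module R A] [AddCommGroup B]
      [Module R B] [AddCommGroup C] [Module R C] (f : A →ₗ[R] B) (g : B →ₗ[R] C),
      Function.Injective f → Function.Surjective g →
      LinearMap.range f = LinearMap.ker g → ℓ B = ℓ A + ℓ C)

include hadd in
lemma laux_sub (M : Type u) [AddCommGroup M] [Module R M] (N : Submodule R M) :
    ℓ M = ℓ N + ℓ (M ⧸ N) :=
  hadd N M (M ⧸ N) N.subtype N.mkQ N.injective_subtype N.mkQ_surjective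
    (by rw [Submodule.range_subtype, Submodule.ker_mkQ])

include hzero hadd in
lemma laux_iso {M N : Type u} [AddCommGroup M] [Module R M] [AddCommGroup N]
    [Module R N] (e : M ≃ₗ[R] N) : ℓ M = ℓ N := by
  have h := hadd M N (N ⧸ (⊤ : Submodule R N)) e.toLinearMap (⊤ : Submodule R N).mkQ
    e.injective (Submodule.mkQ_surjective _)
    (by rw [LinearEquiv.range, Submodule.ker_mkQ])
  rw [h, hzero (N ⧸ (⊤ : Submodule R N))
    (Submodule.Quotient.subsingleton_iff.2 rfl), add_zero]

include hzero hadd in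
lemma laux_surj {M N : Type u} [AddCommGroup M] [Module R M] [AddCommGroup N]
    [Module R N] (g : M →ₗ[R] N) (hg : Function.Surjective g) : ℓ N ≤ ℓ M := by
  have h := laux_sub ℓ hadd M (LinearMap.ker g)
  rw [laux_iso ℓ hzero hadd (g.quotKerEquivOfSurjective hg)] at h
  rw [h]
  exact le_add_self

include hzero hadd in
lemma laux_span (J : Ideal R) (hJ : ℓ (R ⧸ J) = 0)
    (M : Type u) [AddCommGroup M] [Module R M]
    (hk : ∀ j ∈ J, ∀ m : M, j • m = 0) (s : Finset M) :
    ℓ (Submodule.span R (s : Set M)) = 0 := by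
  classical
  induction s using Finset.induction_on with
  | empty =>
      refine hzero _ ?_
      rw [Finset.coe_empty, Submodule.span_empty]
      infer_instance
  | @insert a s ha ih =>
      rw [Finset.coe_insert]
      set P := Submodule.span R (s : Set M) with hP
      set Q := Submodule.span R (insert a (s : Set M)) with hQ
      have hPQ : P ≤ Q := Submodule.span_mono (Set.subset_insert _ _)
      set P' : Submodule R Q := P.comap Q.subtype with hP'
      have e1 : (P' : Type u) ≃ₗ[R] P := Submodule.comapSubtypeEquivOfLe hPQ
      have h2 := laux_sub ℓ hadd Q P'
      have hP'0 : ℓ P' = 0 := by rw [laux_iso ℓ hzero hadd e1]; exact ih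
      have haQ : a ∈ Q := Submodule.subset_span (Set.mem_insert a _)
      set aa : Q := ⟨a, haQ⟩ with haa
      set φ : R →ₗ[R] (Q ⧸ P') := LinearMap.toSpanSingleton R _ (P'.mkQ aa) with hφ
      have hle : J ≤ LinearMap.ker φ := by
        intro j hj
        rw [LinearMap.mem_ker, hφ, LinearMap.toSpanSingleton_apply, ← map_smul]
        have hz : j • aa = 0 := Subtype.ext (hk j hj a)
        rw [hz, map_zero]
      set ψ : (R ⧸ J) →ₗ[R] (Q ⧸ P') := Submodule.liftQ J φ hle with hψdef
      have hψ : Function.Surjective ψ := by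
        intro x
        obtain ⟨⟨q, hq⟩, rfl⟩ := P'.mkQ_surjective x
        have hq' := hq
        rw [hQ, Submodule.span_insert] at hq'
        obtain ⟨y, hy, z, hz, hyz⟩ := Submodule.mem_sup.1 hq'
        obtain ⟨r, rfl⟩ := Submodule.mem_span_singleton.1 hy
        refine ⟨Submodule.Quotient.mk r, ?_⟩
        have : ψ (Submodule.Quotient.mk r) = φ r := Submodule.liftQ_apply J φ r
        rw [this, hφ, LinearMap.toSpanSingleton_apply, ← map_smul,
          Submodule.mkQ_apply, Submodule.mkQ_apply]
        refine (Submodule.Quotient.eq P').2 ?_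
        rw [hP', Submodule.mem_comap]
        have hcoe : (Q.subtype) (r • aa - ⟨q, hq⟩) = r • a - q := rfl
        rw [hcoe, ← hyz]
        have : r • a - (r • a + z) = -z := by abel
        rw [this]
        exact neg_mem hz
      have hq0 : ℓ (Q ⧸ P') = 0 := by
        refine le_antisymm ?_ zero_le
        rw [← hJ]
        exact laux_surj ℓ hzero hadd ψ hψ
      rw [h2, hP'0, hq0, add_zero]

include hzero hadd in
lemma laux_kill
    (hsup : ∀ (M : Type u) [AddCommGroup M] [Module R M],
      ℓ M = ⨆ N : {N : Submodule R M // N.FG}, ℓ N.1)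
    (J : Ideal R) (hJ : ℓ (R ⧸ J) = 0)
    (M : Type u) [AddCommGroup M] [Module R M]
    (hk : ∀ j ∈ J, ∀ m : M, j • m = 0) : ℓ M = 0 := by
  rw [hsup M]
  refine le_antisymm (iSup_le fun N => ?_) zero_le
  obtain ⟨s, hs⟩ := N.2
  calc ℓ N.1 = ℓ (Submodule.span R (s : Set M)) := by rw [hs]
    _ = 0 := laux_span ℓ hzero hadd J hJ M hk s
    _ ≤ 0 := le_rfl

end Aux

theorem stmt18 {R : Type u} [CommRing R] [IsDomain R] (hR : AlmostDedekind R)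
    (ℓ : ∀ (M : Type u) [AddCommGroup M] [Module R M], ℝ≥0∞)
    (hsing : ∀ (M : Type u) [AddCommGroup M] [Module R M], ℓ M = 0 ∨ ℓ M = ∞)
    (hzero : ∀ (M : Type u) [AddCommGroup M] [Module R M], Subsingleton M → ℓ M = 0)
    (hadd : ∀ (A B C : Type u) [AddCommGroup A] [Module R A] [AddCommGroup B]
      [Module R B] [AddCommGroup C] [Module R C] (f : A →ₗ[R] B) (g : B →ₗ[R] C),
      Function.Injective f → Function.Surjective g →
      LinearMap.range f = LinearMap.ker g → ℓ B = ℓ A + ℓ C)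
    (hsup : ∀ (M : Type u) [AddCommGroup M] [Module R M],
      ℓ M = ⨆ N : {N : Submodule R M // N.FG}, ℓ N.1) :
    ∀ I J : Ideal R,
      (ℓ (R ⧸ (I * J)) = ℓ (R ⧸ I) + ℓ (R ⧸ J)) ∧
      (∀ n : ℕ, 1 ≤ n → I ^ n ≤ J → J ≤ I → ℓ (R ⧸ I) = ℓ (R ⧸ J)) := by
  have key : ∀ S T : Ideal R, S ≤ T →
      ℓ (R ⧸ S) = ℓ (Submodule.map S.mkQ T) + ℓ (R ⧸ T) := by
    intro S T h
    rw [laux_sub ℓ hadd (R ⧸ S) (Submodule.map S.mkQ T),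
      laux_iso ℓ hzero hadd (Submodule.quotientQuotientEquivQuotient S T h)]
  have hmono : ∀ S T : Ideal R, S ≤ T → ℓ (R ⧸ T) ≤ ℓ (R ⧸ S) := by
    intro S T h
    rw [key S T h]
    exact le_add_self
  have τmul : ∀ I J : Ideal R, ℓ (R ⧸ (I * J)) = ℓ (R ⧸ I) + ℓ (R ⧸ J) := by
    intro I J
    rcases hsing (R ⧸ I) with hI | hI
    · rcases hsing (R ⧸ J) with hJ | hJ
      · rw [hI, hJ, add_zero]
        rw [key (I * J) I Ideal.mul_le_left, hI, add_zero]
        refine laux_kill ℓ hzero hadd hsup J hJ _ ?_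
        rintro j hj ⟨x, hx⟩
        obtain ⟨y, hyI, rfl⟩ := Submodule.mem_map.1 hx
        refine Subtype.ext ?_
        show j • (I * J).mkQ y = 0
        rw [← map_smul, Submodule.mkQ_apply, Submodule.Quotient.mk_eq_zero]
        have : j • y = y * j := by rw [smul_eq_mul, mul_comm]
        rw [this]
        exact Ideal.mul_mem_mul hyI hj
      · rw [hJ, add_top]
        rw [key (I * J) J Ideal.mul_le_right, hJ, add_top]
    · rw [hI, top_add]
      rw [key (I * J) I Ideal.mul_le_left, hI, add_top]
  have hpow : ∀ I : Ideal R, ∀ n : ℕ, 1 ≤ n → ℓ (R ⧸ I ^ n) = ℓ (R ⧸ I) := by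
    intro I n hn
    induction n with
    | zero => omega
    | succ n ih =>
        rcases Nat.eq_or_lt_of_le hn with h1 | h1
        · rw [← h1, pow_one]
        · have hn' : 1 ≤ n := by omega
          rw [pow_succ, τmul (I ^ n) I, ih hn']
          rcases hsing (R ⧸ I) with hI | hI
          · rw [hI, add_zero]
          · rw [hI, top_add]
  intro I J
  refine ⟨τmul I J, ?_⟩
  intro n hn h1 h2
  refine le_antisymm (hmono J I h2) ?_
  calc ℓ (R ⧸ J) ≤ ℓ (R ⧸ I ^ n) := hmono (I ^ n) J h1
    _ = ℓ (R ⧸ I) := hpow I n hn
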